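/- arXiv:1804.05495 — 4 statements merged into one kernel-verified Lean document; each statement's English description precedes it below -/
import Mathlib

section
/- Dirk Gently's Principle is equivalent to the schema ((φ ∧ ψ) → ϑ) → ((φ → ϑ) ∨ (ψ → ϑ)) for all propositions φ, ψ, ϑ. -/
theorem dgp_iff_conj_split :
    (∀ φ ψ : Prop, (φ → ψ) ∨ (ψ → φ)) ↔
      (∀ φ ψ ϑ : Prop, ((φ ∧ ψ) → ϑ) → ((φ → ϑ) ∨ (ψ → ϑ))) := by
  constructor
  · intro dgp φ ψ ϑ h
    rcases dgp φ ψ with hfp | hpf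
    · exact Or.inl fun hφ => h ⟨hφ, hfp hφ⟩
    · exact Or.inr fun hψ => h ⟨hpf hψ, hψ⟩
  · intro hs φ ψ
    rcases hs φ ψ (φ ∧ ψ) id with h | h
    · exact Or.inl fun hφ => (h hφ).2
    · exact Or.inr fun hψ => (h hψ).1
end

section
/- Dirk Gently's Principle is equivalent to the distribution schema (φ → ψ ∨ ϑ) → (φ → ψ) ∨ (φ → ϑ) for all propositions φ, ψ, ϑ. -/
theorem dgp_iff_imp_or_distrib :
    (∀ φ ψ : Prop, (φ → ψ) ∨ (ψ → φ)) ↔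
      (∀ φ ψ ϑ : Prop, (φ → ψ ∨ ϑ) → ((φ → ψ) ∨ (φ → ϑ))) := by
  constructor
  · intro dgp φ ψ ϑ h
    rcases dgp ψ ϑ with hpt | htp
    · exact Or.inr fun hφ => (h hφ).elim hpt id
    · exact Or.inl fun hφ => (h hφ).elim id htp
  · intro dist φ ψ
    rcases dist (φ ∨ ψ) φ ψ id with h | h
    · exact Or.inr fun hψ => h (Or.inr hψ)
    · exact Or.inl fun hφ => h (Or.inl hφ)
end

section
/- If every finite subset of a countable graph G is k-colourable for every finite subgraph, and Weak Kőnig's Lemma holds, then G itself is k-colourable (the de Bruijn–Erdős theorem for countable graphs follows from WKL). -/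
theorem deBruijn_Erdos_of_WKL (k : ℕ) (E : ℕ → ℕ → Prop)
    (hsymm : ∀ u v, E u v → E v u) (hirr : ∀ u, ¬ E u u)
    (hdec : ∀ u v, E u v ∨ ¬ E u v)
    (WKL : ∀ T : List (Fin k) → Prop,
      (∀ u, T u ∨ ¬ T u) →
      (∀ u w, T (u ++ w) → T u) →
      (∀ n, ∃ u, T u ∧ u.length = n) →
      ∃ α : ℕ → Fin k, ∀ n, T (List.ofFn fun i : Fin n => α i))
    (hfin : ∀ m, ∃ c : ℕ → Fin k,
      ∀ u v, u < m → v < m → E u v → c u ≠ c v) :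
    ∃ c : ℕ → Fin k, ∀ u v, E u v → c u ≠ c v := by
  set T : List (Fin k) → Prop := fun u =>
    ∀ i j (hi : i < u.length) (hj : j < u.length),
      E i j → u.get ⟨i, hi⟩ ≠ u.get ⟨j, hj⟩ with hT
  obtain ⟨α, hα⟩ := WKL T
    (fun u => Classical.em (T u))
    (by
      intro u w h i j hi hj hE
      have := h i j (by simp [Nat.lt_of_lt_of_le hi (Nat.le_add_right _ _)])
        (by simp [Nat.lt_of_lt_of_le hj (Nat.le_add_right _ _)]) hE
      simp only [List.get_eq_getElem] at this ⊢
      rwa [List.getElem_append_left hi, List.getElem_append_left hj] at this)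
    (by
      intro n
      obtain ⟨c, hc⟩ := hfin n
      refine ⟨List.ofFn fun i : Fin n => c i, ?_, by simp⟩
      intro i j hi hj hE
      simp only [List.length_ofFn] at hi hj
      simp only [List.get_ofFn]
      exact fun h => hc i j hi hj hE (by simpa using h))
  refine ⟨α, fun u v hE hne => ?_⟩
  have h := hα (max u v + 1)
  have hu : u < max u v + 1 := Nat.lt_succ_of_le (le_max_left _ _)
  have hv : v < max u v + 1 := Nat.lt_succ_of_le (le_max_right _ _)
  have := h u v (by simpa using hu) (by simpa using hv) hE
  exact this (by simp only [List.get_ofFn]; exact_mod_cast hne)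
end

section
/- WKL is equivalent to compactness of propositional logic for countable sets of formulas: every decidable infinite binary tree has an infinite path if and only if every countable set Γ of propositional formulas, all of whose finite subsets are satisfiable, is satisfiable. -/
/-- Propositional formulas over countably many proposition symbols `A₀, A₁, …`
(with `A₀` playing the role of `⊥`, enforced by requiring assignments to send
symbol `0` to `false`). -/
inductive PropForm : Type
  | var : ℕ → PropForm
  | not : PropForm → PropForm
  | and : PropForm → PropForm → PropForm
  | or : PropForm → PropForm → PropForm
  | imp : PropForm → PropForm → PropForm

/-- Evaluation of a propositional formula under a truth assignment. -/
def PropForm.eval (B : ℕ → Bool) : PropForm → Bool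
  | PropForm.var n => B n
  | PropForm.not φ => !(φ.eval B)
  | PropForm.and φ ψ => φ.eval B && ψ.eval B
  | PropForm.or φ ψ => φ.eval B || ψ.eval B
  | PropForm.imp φ ψ => !(φ.eval B) || ψ.eval B

/-- largest variable index occurring (0 if none) -/
def PropForm.maxVar : PropForm → ℕ
  | .var n => n
  | .not φ => φ.maxVar
  | .and φ ψ => max φ.maxVar ψ.maxVar
  | .or φ ψ => max φ.maxVar ψ.maxVar
  | .imp φ ψ => max φ.maxVar ψ.maxVar

lemma PropForm.eval_congr (φ : PropForm) (B B' : ℕ → Bool)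
    (h : ∀ n ≤ φ.maxVar, B n = B' n) : φ.eval B = φ.eval B' := by
  induction φ with
  | var n => exact h n le_rfl
  | not φ ih => simp [eval, ih (fun n hn => h n hn)]
  | and φ ψ ih1 ih2 =>
      simp [eval, maxVar] at h ⊢
      rw [ih1 (fun n hn => h n (Or.inl hn)), ih2 (fun n hn => h n (Or.inr hn))]
  | or φ ψ ih1 ih2 =>
      simp [eval, maxVar] at h ⊢
      rw [ih1 (fun n hn => h n (Or.inl hn)), ih2 (fun n hn => h n (Or.inr hn))]
  | imp φ ψ ih1 ih2 =>
      simp [eval, maxVar] at h ⊢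
      rw [ih1 (fun n hn => h n (Or.inl hn)), ih2 (fun n hn => h n (Or.inr hn))]

/-- conjunction of literals saying variable `k+i` has value `u[i]` -/
def litsAux : List Bool → ℕ → PropForm
  | [], _ => PropForm.imp (PropForm.var 0) (PropForm.var 0)
  | b :: t, k =>
      PropForm.and (if b then PropForm.var k else PropForm.not (PropForm.var k))
        (litsAux t (k + 1))

lemma litsAux_eval (B : ℕ → Bool) (u : List Bool) (k : ℕ) :
    (litsAux u k).eval B = true ↔ ∀ i (h : i < u.length), u[i] = B (k + i) := by
  induction u generalizing k with
  | nil => simp [litsAux, PropForm.eval]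
  | cons b t ih =>
      simp only [litsAux, PropForm.eval, Bool.and_eq_true, ih, List.length_cons]
      constructor
      · rintro ⟨h1, h2⟩ i hi
        match i, hi with
        | 0, _ =>
            simp only [List.getElem_cons_zero, Nat.add_zero]
            cases b <;> simpa [PropForm.eval] using h1
        | (j + 1), hj =>
            have := h2 j (by omega)
            simpa [show k + 1 + j = k + (j + 1) by omega] using this
      · intro h
        constructor
        · have := h 0 (by omega)
          simp only [List.getElem_cons_zero, Nat.add_zero] at this
          cases b <;> simp_all [PropForm.eval]
        · intro j hj
          have := h (j + 1) (by omega)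
          simpa [show k + 1 + j = k + (j + 1) by omega] using this

def bigOr : List PropForm → PropForm
  | [] => PropForm.var 0
  | φ :: l => PropForm.or φ (bigOr l)

lemma bigOr_eval (B : ℕ → Bool) (hB : B 0 = false) (l : List PropForm) :
    (bigOr l).eval B = true ↔ ∃ φ ∈ l, φ.eval B = true := by
  induction l with
  | nil => simp [bigOr, PropForm.eval, hB]
  | cons φ l ih => simp [bigOr, PropForm.eval, ih]

def allLists : ℕ → List (List Bool)
  | 0 => [[]]
  | n + 1 => (allLists n).flatMap fun u => [false :: u, true :: u]

lemma mem_allLists (u : List Bool) (n : ℕ) : u ∈ allLists n ↔ u.length = n := by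
  induction n generalizing u with
  | zero => simp [allLists]
  | succ n ih =>
      simp only [allLists, List.mem_flatMap, List.mem_cons]
      constructor
      · rintro ⟨v, hv, h | h | h⟩ <;> simp_all [ih]
      · intro h
        cases u with
        | nil => simp at h
        | cons b t =>
            refine ⟨t, (ih t).mpr (by simpa using h), ?_⟩
            cases b <;> simp

theorem wkl_iff_propositional_compactness :
    (∀ T : List Bool → Prop,
      (∀ u, T u ∨ ¬ T u) →
      (∀ u w, T (u ++ w) → T u) →
      (∀ n, ∃ u, T u ∧ u.length = n) →
      ∃ α : ℕ → Bool, ∀ n, T (List.ofFn fun i : Fin n => α i)) ↔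
    (∀ γ : ℕ → PropForm,
      (∀ m, ∃ B : ℕ → Bool, B 0 = false ∧ ∀ i ≤ m, (γ i).eval B = true) →
      ∃ B : ℕ → Bool, B 0 = false ∧ ∀ n, (γ n).eval B = true) := by
  constructor
  · -- WKL → compactness
    intro wkl γ hfin
    set T : List Bool → Prop := fun u =>
      ∃ B : ℕ → Bool, B 0 = false ∧ (∀ i : Fin u.length, B i = u.get i) ∧
        ∀ i < u.length, (γ i).eval B = true with hT
    have hdec : ∀ u, T u ∨ ¬ T u := fun u => Classical.em _
    have hclosed : ∀ u w, T (u ++ w) → T u := by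
      rintro u w ⟨B, hB0, hag, hev⟩
      refine ⟨B, hB0, ?_, ?_⟩
      · intro i
        have h := hag ⟨i, by simp; omega⟩
        simpa [List.getElem_append_left i.isLt] using h
      · intro i hi
        exact hev i (by simp; omega)
    have hht : ∀ n, ∃ u, T u ∧ u.length = n := by
      intro n
      obtain ⟨B, hB0, hB⟩ := hfin n
      refine ⟨List.ofFn fun i : Fin n => B i, ⟨B, hB0, ?_, ?_⟩, by simp⟩
      · intro i
        simp
      · intro i hi
        simp at hi
        exact hB i (le_of_lt hi)
    obtain ⟨α, hα⟩ := wkl T hdec hclosed hht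
    refine ⟨α, ?_, ?_⟩
    · obtain ⟨B, hB0, hag, -⟩ := hα 1
      have := hag ⟨0, by simp⟩
      simp at this
      rw [← this, hB0]
    · intro n
      set m := max (n + 1) ((γ n).maxVar + 1) with hm
      obtain ⟨B, hB0, hag, hev⟩ := hα m
      have hagm : ∀ i : ℕ, i < m → B i = α i := by
        intro i hi
        have h := hag ⟨i, by simpa using hi⟩
        simpa using h
      have hevn : (γ n).eval B = true := hev n (by simp; omega)
      rw [← hevn]
      apply PropForm.eval_congr
      intro k hk
      exact (hagm k (by omega)).symm
  · -- compactness → WKL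
    intro compact T hdec hclosed hht
    classical
    set γ : ℕ → PropForm := fun n =>
      bigOr (((allLists n).filter fun u => decide (T u)).map fun u => litsAux u 1) with hγ
    have hfin : ∀ m, ∃ B : ℕ → Bool, B 0 = false ∧ ∀ i ≤ m, (γ i).eval B = true := by
      intro m
      obtain ⟨u, hu, hlen⟩ := hht m
      set B : ℕ → Bool := fun k => if k = 0 then false else u.getD (k - 1) false with hB
      refine ⟨B, by simp [hB], ?_⟩
      intro n hn
      rw [hγ]
      rw [bigOr_eval B (by simp [hB])]
      refine ⟨litsAux (u.take n) 1, ?_, ?_⟩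
      · simp only [List.mem_map]
        refine ⟨u.take n, ?_, rfl⟩
        rw [List.mem_filter]
        constructor
        · rw [mem_allLists]; simp [hlen]; omega
        · simp only [decide_eq_true_eq]
          exact hclosed _ (u.drop n) (by rw [List.take_append_drop]; exact hu)
      · rw [litsAux_eval]
        intro i hi
        have hin : i < n := by simp at hi; omega
        have him : i < m := by omega
        simp [hB, hlen, him, hin, List.getD, List.getElem_take]
    obtain ⟨B, hB0, hB⟩ := compact γ hfin
    refine ⟨fun i => B (i + 1), ?_⟩
    intro n
    have h := hB n
    rw [hγ] at h
    rw [bigOr_eval B hB0] at h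
    obtain ⟨φ, hφmem, hφ⟩ := h
    simp only [List.mem_map, List.mem_filter, decide_eq_true_eq] at hφmem
    obtain ⟨u, ⟨hual, huT⟩, rfl⟩ := hφmem
    have hlen : u.length = n := (mem_allLists u n).mp hual
    have hget := (litsAux_eval B u 1).mp hφ
    have heq : (List.ofFn fun i : Fin n => B (i + 1)) = u := by
      apply List.ext_getElem (by simp [hlen])
      intro i h1 h2
      have := hget i (by omega)
      simp only [List.getElem_ofFn]
      rw [this]
      congr 1
      omega
    rw [heq]
    exact huT
end
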